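/- Let φ : (0,∞) → (0,∞) satisfy the weak scaling property with constants 0 < σ₁ ≤ σ₂ < 2 and a ≥ 1. For ρ ∈ (0,1), define φ̄(r) = φ(ρr)/φ(ρ) and c_ψ = (∫₀¹ r/ψ(r) dr)⁻¹ for a scale function ψ. Then φ(ρ) · c_{φ̄}/c_φ ≤ 1 + a², i.e., ρ² (∫₀¹ r/φ(r) dr)(∫₀^ρ r/φ(r) dr)⁻¹ ≤ 1 + a². -/

import Mathlib

open MeasureTheory

/-- Lemma 2.3(ii): `φ(ρ) c_{φ̄}/c_φ = ρ² (∫₀¹ r/φ)(∫₀^ρ r/φ)⁻¹ ≤ 1 + a²`. -/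
theorem cphi_rescaled_bound (σ₁ σ₂ a : ℝ) (hσ₁ : 0 < σ₁) (hσ₁₂ : σ₁ ≤ σ₂) (hσ₂ : σ₂ < 2)
    (ha : 1 ≤ a) (φ : ℝ → ℝ) (hφpos : ∀ r : ℝ, 0 < r → 0 < φ r) (hφmeas : Measurable φ)
    (hscal : ∀ r R : ℝ, 0 < r → r ≤ R →
      a⁻¹ * (R / r) ^ σ₁ ≤ φ R / φ r ∧ φ R / φ r ≤ a * (R / r) ^ σ₂)
    (ρ : ℝ) (hρ : ρ ∈ Set.Ioo (0 : ℝ) 1) :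
    ρ ^ 2 * (∫ r in Set.Ioo (0 : ℝ) 1, r / φ r) *
      (∫ r in Set.Ioo (0 : ℝ) ρ, r / φ r)⁻¹ ≤ 1 + a ^ 2 := by
  obtain ⟨hρ0, hρ1⟩ := hρ
  set f : ℝ → ℝ := fun r => r / φ r with hf
  have ha0 : (0:ℝ) < a := lt_of_lt_of_le one_pos ha
  by_cases hint : IntegrableOn f (Set.Ioo (0:ℝ) 1) volume
  · -- integrable case
    have hII : IntervalIntegrable f volume 0 1 := by
      rw [intervalIntegrable_iff_integrableOn_Ioc_of_le zero_le_one]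
      exact hint.congr_set_ae MeasureTheory.Ioo_ae_eq_Ioc.symm
    have hII1 : IntervalIntegrable f volume 0 ρ := by
      apply hII.mono_set
      rw [Set.uIcc_of_le hρ0.le, Set.uIcc_of_le zero_le_one]
      exact Set.Icc_subset_Icc le_rfl hρ1.le
    have hII2 : IntervalIntegrable f volume ρ 1 := by
      apply hII.mono_set
      rw [Set.uIcc_of_le hρ1.le, Set.uIcc_of_le zero_le_one]
      exact Set.Icc_subset_Icc hρ0.le le_rfl
    have hIIsq : IntervalIntegrable f volume (ρ*ρ) ρ := by
      apply hII.mono_set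
      rw [Set.uIcc_of_le (by nlinarith : ρ*ρ ≤ ρ), Set.uIcc_of_le zero_le_one]
      exact Set.Icc_subset_Icc (by positivity) hρ1.le
    -- rewrite set integrals as interval integrals
    have e1 : (∫ r in Set.Ioo (0:ℝ) 1, f r) = ∫ r in (0:ℝ)..1, f r := by
      rw [intervalIntegral.integral_of_le zero_le_one, MeasureTheory.integral_Ioc_eq_integral_Ioo]
    have e2 : (∫ r in Set.Ioo (0:ℝ) ρ, f r) = ∫ r in (0:ℝ)..ρ, f r := by
      rw [intervalIntegral.integral_of_le hρ0.le, MeasureTheory.integral_Ioc_eq_integral_Ioo]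
    set A := ∫ r in (0:ℝ)..ρ, f r with hA
    set B := ∫ r in ρ..(1:ℝ), f r with hB
    set C := ∫ r in (ρ*ρ)..ρ, f r with hC
    have hApos : 0 < A := by
      refine intervalIntegral.intervalIntegral_pos_of_pos_on hII1 (fun x hx => ?_) hρ0
      exact div_pos hx.1 (hφpos x hx.1)
    have hsplit : (∫ r in (0:ℝ)..1, f r) = A + B :=
      (intervalIntegral.integral_add_adjacent_intervals hII1 hII2).symm
    have hCnonneg : 0 ≤ C := by
      refine intervalIntegral.integral_nonneg (by nlinarith) (fun x hx => ?_)
      have hx0 : 0 < x := lt_of_lt_of_le (by positivity) hx.1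
      exact le_of_lt (div_pos hx0 (hφpos x hx0))
    have hCA : C ≤ A := by
      have : A = (∫ r in (0:ℝ)..(ρ*ρ), f r) + C := by
        rw [hA, hC, intervalIntegral.integral_add_adjacent_intervals _ hIIsq]
        apply hII1.mono_set
        rw [Set.uIcc_of_le (by positivity : (0:ℝ) ≤ ρ*ρ), Set.uIcc_of_le hρ0.le]
        exact Set.Icc_subset_Icc le_rfl (by nlinarith)
      have h0 : 0 ≤ ∫ r in (0:ℝ)..(ρ*ρ), f r := by
        refine intervalIntegral.integral_nonneg (by positivity) (fun x hx => ?_)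
        rcases eq_or_lt_of_le hx.1 with h | h
        · simp [f, ← h]
        · exact le_of_lt (div_pos h (hφpos x h))
      linarith
    -- key comparison: B ≤ a * ρ⁻¹ * ∫ f(ρx)
    have hg : IntervalIntegrable (fun x => a * ρ⁻¹ * f (ρ * x)) volume ρ 1 := by
      have := (hIIsq.comp_mul_left (c := ρ)).const_mul (a * ρ⁻¹)
      rwa [mul_div_assoc, div_self hρ0.ne', mul_one] at this
    have hBbound : B ≤ a * ρ⁻¹ * (ρ⁻¹ * C) := by
      have hmono : B ≤ ∫ x in ρ..(1:ℝ), a * ρ⁻¹ * f (ρ * x) := by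
        refine intervalIntegral.integral_mono_on hρ1.le hII2 hg (fun x hx => ?_)
        have hx0 : 0 < x := lt_of_lt_of_le hρ0 hx.1
        have hρx0 : 0 < ρ * x := by positivity
        have hρxx : ρ * x ≤ x := by nlinarith
        have hsc := (hscal (ρ*x) x hρx0 hρxx).1
        have hpow : (1:ℝ) ≤ (x / (ρ*x)) ^ σ₁ := by
          apply Real.one_le_rpow _ hσ₁.le
          rw [le_div_iff₀ hρx0]; nlinarith
        have h1 : a⁻¹ ≤ φ x / φ (ρ*x) := by
          calc a⁻¹ = a⁻¹ * 1 := (mul_one _).symm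
          _ ≤ a⁻¹ * (x / (ρ*x)) ^ σ₁ := by
              apply mul_le_mul_of_nonneg_left hpow (by positivity)
          _ ≤ φ x / φ (ρ*x) := hsc
        have hφx := hφpos x hx0
        have hφρx := hφpos (ρ*x) hρx0
        have h2 : φ (ρ*x) ≤ a * φ x := by
          rw [le_div_iff₀ hφρx, inv_mul_eq_div, div_le_iff₀ ha0] at h1
          linarith [h1]
        show x / φ x ≤ a * ρ⁻¹ * ((ρ*x) / φ (ρ*x))
        have heq : a * ρ⁻¹ * ((ρ*x) / φ (ρ*x)) = (a * x) / φ (ρ*x) := by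
          field_simp
        rw [heq, div_le_div_iff₀ hφx hφρx]
        nlinarith
      have hchg : (∫ x in ρ..(1:ℝ), a * ρ⁻¹ * f (ρ * x)) = a * ρ⁻¹ * (ρ⁻¹ * C) := by
        rw [intervalIntegral.integral_const_mul, intervalIntegral.integral_comp_mul_left f hρ0.ne',
          mul_one, smul_eq_mul, hC]
      linarith [hmono, hchg.le]
    -- finish
    rw [e1, e2, hsplit, ← div_eq_mul_inv, div_le_iff₀ hApos]
    have hBnonneg : 0 ≤ B := by
      refine intervalIntegral.integral_nonneg hρ1.le (fun x hx => ?_)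
      have hx0 : 0 < x := lt_of_lt_of_le hρ0 hx.1
      exact le_of_lt (div_pos hx0 (hφpos x hx0))
    have key : ρ ^ 2 * B ≤ a * C := by
      have h1 : ρ ^ 2 * B ≤ ρ ^ 2 * (a * ρ⁻¹ * (ρ⁻¹ * C)) :=
        mul_le_mul_of_nonneg_left hBbound (sq_nonneg ρ)
      have h2 : ρ ^ 2 * (a * ρ⁻¹ * (ρ⁻¹ * C)) = a * C := by
        field_simp
      linarith
    have hρ2 : ρ ^ 2 ≤ 1 := by nlinarith
    have haa : a ≤ a ^ 2 := by nlinarith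
    nlinarith [key, mul_le_mul_of_nonneg_left hCA ha0.le,
      mul_le_mul_of_nonneg_right hρ2 hApos.le,
      mul_le_mul_of_nonneg_right haa hApos.le, sq_nonneg ρ]
  · -- non-integrable case: the first integral is zero
    rw [MeasureTheory.integral_undef hint]
    have : ρ ^ 2 * 0 * (∫ r in Set.Ioo (0 : ℝ) ρ, f r)⁻¹ = 0 := by ring
    rw [this]
    positivity
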